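/- Let x, y : I → ℝ be C² with y > 0, x'² + y'² = 1 (hence x'x'' = −y'y''). If 2yH − yy'x'' + yx'y'' − x' = 0 (the mean curvature equation), then the complex-valued function C(s) = y y' + i y x' satisfies the linear ODE C' − 2iH C − 1 = 0. Conversely, multiplying the mean curvature equation by x' gives 2yx'H + (yy')' − 1 = 0 and by y' gives 2yy'H − (yx')' = 0. -/

import Mathlib

open Complex

/-- For a unit-speed curve `(x, y, 0)` in the spacelike `xy`-plane generating a
timelike revolution surface about the spacelike `x`-axis with mean curvature `H`:
if `2yH − yy'x'' + yx'y'' − x' = 0`, then `C = yy' + i yx'` satisfies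
`C' − 2iHC − 1 = 0`; moreover, multiplying the mean curvature equation by `x'`
gives `2yx'H + (yy')' − 1 = 0` and by `y'` gives `2yy'H − (yx')' = 0`. -/
theorem mean_curvature_spacelike_plane (H x y x' y' x'' y'' : ℝ → ℝ)
    (hx : ∀ s, HasDerivAt x (x' s) s) (hx' : ∀ s, HasDerivAt x' (x'' s) s)
    (hy : ∀ s, HasDerivAt y (y' s) s) (hy' : ∀ s, HasDerivAt y' (y'' s) s)
    (hypos : ∀ s, 0 < y s)
    (hunit : ∀ s, x' s ^ 2 + y' s ^ 2 = 1)
    (hmc : ∀ s, 2 * y s * H s - y s * y' s * x'' s + y s * x' s * y'' s - x' s = 0) :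
    (∀ s, HasDerivAt (fun t => ((y t * y' t : ℝ) : ℂ) + Complex.I * ((y t * x' t : ℝ) : ℂ))
        (2 * Complex.I * (H s : ℂ) *
          (((y s * y' s : ℝ) : ℂ) + Complex.I * ((y s * x' s : ℝ) : ℂ)) + 1) s) ∧
    (∀ s, HasDerivAt (fun t => y t * y' t) (1 - 2 * y s * x' s * H s) s) ∧
    (∀ s, HasDerivAt (fun t => y t * x' t) (2 * y s * y' s * H s) s) := by
  -- orthogonality: x'x'' = -y'y''
  have horth : ∀ s, x' s * x'' s + y' s * y'' s = 0 := by
    intro s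
    have h1 : HasDerivAt (fun t => x' t ^ 2 + y' t ^ 2)
        (2 * x' s * x'' s + 2 * y' s * y'' s) s := by
      have := ((hx' s).pow 2).add ((hy' s).pow 2)
      exact this.congr_deriv (by ring)
    have h2 : HasDerivAt (fun _ : ℝ => (1 : ℝ)) 0 s := by
      simpa using (hasDerivAt_const s (1 : ℝ))
    have h3 : HasDerivAt (fun t => x' t ^ 2 + y' t ^ 2) 0 s := by
      have : (fun t => x' t ^ 2 + y' t ^ 2) = fun _ : ℝ => (1 : ℝ) := funext hunit
      rw [this]; exact h2
    have := h1.unique h3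
    linarith
  -- the two real identities
  have key1 : ∀ s, y' s ^ 2 + y s * y'' s = 1 - 2 * y s * x' s * H s := by
    intro s
    have hm := hmc s
    have ho := horth s
    have hu := hunit s
    linear_combination x' s * hm + y s * y' s * ho + (1 - y s * y'' s) * hu
  have key2 : ∀ s, y' s * x' s + y s * x'' s = 2 * y s * y' s * H s := by
    intro s
    have hm := hmc s
    have ho := horth s
    have hu := hunit s
    linear_combination (-(y' s)) * hm + y s * x' s * ho - y s * x'' s * hu
  have d1 : ∀ s, HasDerivAt (fun t => y t * y' t) (1 - 2 * y s * x' s * H s) s := by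
    intro s
    have := (hy s).mul (hy' s)
    rw [← key1 s]
    exact this.congr_deriv (by ring)
  have d2 : ∀ s, HasDerivAt (fun t => y t * x' t) (2 * y s * y' s * H s) s := by
    intro s
    have := (hy s).mul (hx' s)
    rw [← key2 s]
    exact this
  refine ⟨fun s => ?_, d1, d2⟩
  have c1 : HasDerivAt (fun t => ((y t * y' t : ℝ) : ℂ))
      ((1 - 2 * y s * x' s * H s : ℝ) : ℂ) s := (d1 s).ofReal_comp
  have c2 : HasDerivAt (fun t => ((y t * x' t : ℝ) : ℂ))
      ((2 * y s * y' s * H s : ℝ) : ℂ) s := (d2 s).ofReal_comp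
  have := c1.add (c2.const_mul Complex.I)
  refine this.congr_deriv ?_
  push_cast
  linear_combination (-(2 * (H s : ℂ) * (y s : ℂ) * (x' s : ℂ))) * Complex.I_sq
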